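/- Let F be a CNF whose incidence graph has pathwidth k−1, and let σ be a forget ordering of var(F) derived from a width-(k−1) path decomposition. Then the subterm width of F with respect to σ is at most 2^{k+1}. -/

import Mathlib

abbrev Var := ℕ
abbrev Lit := Var × Bool
abbrev Clause := Finset Lit
abbrev CNF := Finset Clause

def varsClause (c : Clause) : Finset Var := c.image Prod.fst
def varsCNF (F : CNF) : Finset Var := F.sup varsClause
def sizeCNF (F : CNF) : ℕ := ∑ c ∈ F, c.card

def satClauseOn (X : Finset Var) (f : Var → Bool) (c : Clause) : Prop :=
  ∃ l ∈ c, l.1 ∈ X ∧ f l.1 = l.2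

instance (X : Finset Var) (f : Var → Bool) : DecidablePred (satClauseOn X f) := fun c => by
  unfold satClauseOn; infer_instance

def restrict (F : CNF) (X : Finset Var) (f : Var → Bool) : CNF :=
  (F.filter (fun c => ¬ satClauseOn X f c)).image (fun c => c.filter (fun l => l.1 ∉ X))

def st (F : CNF) (X : Finset Var) : Set CNF := { G | ∃ f : Var → Bool, G = restrict F X f }

noncomputable def stw (F : CNF) (σ : List Var) : ℕ :=
  (Finset.Icc 1 σ.length).sup fun i => (st F ((σ.take i).toFinset)).ncard

def satCNF (F : CNF) (f : Var → Bool) : Prop := ∀ c ∈ F, ∃ l ∈ c, f l.1 = l.2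

structure OBDD (σ : List Var) where
  size : ℕ
  label : Fin size → (Fin σ.length) ⊕ Bool
  succ : Fin size → Bool → Fin size
  source : Fin size
  ordered : ∀ v i, label v = Sum.inl i → ∀ b j, label (succ v b) = Sum.inl j → i < j

def OBDD.evalAux {σ : List Var} (D : OBDD σ) (f : Var → Bool) : ℕ → Fin D.size → Bool
  | 0, v => match D.label v with | .inr b => b | .inl _ => false
  | n+1, v => match D.label v with
    | .inr b => b
    | .inl i => D.evalAux f n (D.succ v (f (σ.get i)))

def OBDD.eval {σ : List Var} (D : OBDD σ) (f : Var → Bool) : Bool :=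
  D.evalAux f (σ.length + 1) D.source

def OBDD.computes {σ : List Var} (D : OBDD σ) (F : CNF) : Prop :=
  ∀ f : Var → Bool, D.eval f = true ↔ satCNF F f

/-- Vertices of the incidence graph of a CNF: variables and clauses. -/
abbrev IVertex := Var ⊕ Clause

/-- P is a path decomposition of the incidence graph of F. -/
def IsPathDecomp (F : CNF) (P : List (Finset IVertex)) : Prop :=
  (∀ x ∈ varsCNF F, ∃ B ∈ P, Sum.inl x ∈ B) ∧
  (∀ c ∈ F, ∃ B ∈ P, Sum.inr c ∈ B) ∧
  (∀ c ∈ F, ∀ x ∈ varsClause c, ∃ B ∈ P, Sum.inl x ∈ B ∧ Sum.inr c ∈ B) ∧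
  (∀ u : IVertex, ∀ i j k : ℕ, i ≤ j → j ≤ k →
    ∀ (hi : i < P.length) (hj : j < P.length) (hk : k < P.length),
      u ∈ P.get ⟨i, hi⟩ → u ∈ P.get ⟨k, hk⟩ → u ∈ P.get ⟨j, hj⟩)

/-- Index of the first bag of P containing the vertex u. -/
def firstIdx (P : List (Finset IVertex)) (u : IVertex) : ℕ :=
  P.findIdx (fun B => decide (u ∈ B))

/-- σ is a forget ordering of var(F) with respect to the path decomposition P:
variables are ordered by the position of the first bag containing them. -/
def IsForgetOrdering (F : CNF) (P : List (Finset IVertex)) (σ : List Var) : Prop :=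
  σ.Nodup ∧ σ.toFinset = varsCNF F ∧
    ∀ x ∈ varsCNF F, ∀ y ∈ varsCNF F,
      firstIdx P (Sum.inl x) < firstIdx P (Sum.inl y) → σ.idxOf x < σ.idxOf y


/- ==================== Auxiliary lemmas ==================== -/

lemma mem_restrict_iff {F : CNF} {X : Finset Var} {f : Var → Bool} {d : Clause} :
    d ∈ restrict F X f ↔ ∃ c ∈ F, ¬ satClauseOn X f c ∧ c.filter (fun l => l.1 ∉ X) = d := by
  simp only [restrict, Finset.mem_image, Finset.mem_filter]
  constructor
  · rintro ⟨c, ⟨h1, h2⟩, h3⟩; exact ⟨c, h1, h2, h3⟩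
  · rintro ⟨c, h1, h2, h3⟩; exact ⟨c, ⟨h1, h2⟩, h3⟩

lemma filter_eq_empty_of_vars_subset {c : Clause} {X : Finset Var}
    (h : varsClause c ⊆ X) : c.filter (fun l => l.1 ∉ X) = ∅ := by
  rw [Finset.filter_eq_empty_iff]
  intro l hl
  simp only [not_not]
  exact h (Finset.mem_image.mpr ⟨l, hl, rfl⟩)

/-- One-sided version of the key determination lemma. -/
lemma restrict_subset_of_sig (F : CNF) (X : Finset Var) (BV : Finset Var) (BC : Finset Clause)
    (hcross : ∀ c ∈ F, c ∉ BC → ∀ l ∈ c, l.1 ∈ X →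
      (∃ y ∈ varsClause c, y ∉ X) → l.1 ∈ BV)
    {f g : Var → Bool}
    (hfg : ∀ v ∈ BV, f v = g v)
    (hsat : ∀ c ∈ BC, (satClauseOn X f c ↔ satClauseOn X g c))
    (hbit : (∃ c ∈ F, varsClause c ⊆ X ∧ ¬ satClauseOn X f c) →
            (∃ c ∈ F, varsClause c ⊆ X ∧ ¬ satClauseOn X g c)) :
    restrict F X f ⊆ restrict F X g := by
  intro d hd
  obtain ⟨c, hcF, hns, hdc⟩ := mem_restrict_iff.mp hd
  by_cases hsub : varsClause c ⊆ X
  · -- d is the empty clause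
    have hde : d = ∅ := hdc ▸ filter_eq_empty_of_vars_subset hsub
    obtain ⟨c', hc'F, hsub', hns'⟩ := hbit ⟨c, hcF, hsub, hns⟩
    refine mem_restrict_iff.mpr ⟨c', hc'F, hns', ?_⟩
    rw [filter_eq_empty_of_vars_subset hsub', hde]
  · -- c has a variable outside X
    obtain ⟨y, hy, hyX⟩ := Finset.not_subset.mp hsub
    have hnsg : ¬ satClauseOn X g c := by
      rintro ⟨l, hl, hlX, hgl⟩
      by_cases hcBC : c ∈ BC
      · exact hns ((hsat c hcBC).mpr ⟨l, hl, hlX, hgl⟩)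
      · have hlBV : l.1 ∈ BV := hcross c hcF hcBC l hl hlX ⟨y, hy, hyX⟩
        exact hns ⟨l, hl, hlX, (hfg _ hlBV).trans hgl⟩
    exact mem_restrict_iff.mpr ⟨c, hcF, hnsg, hdc⟩

lemma restrict_eq_of_sig (F : CNF) (X : Finset Var) (BV : Finset Var) (BC : Finset Clause)
    (hcross : ∀ c ∈ F, c ∉ BC → ∀ l ∈ c, l.1 ∈ X →
      (∃ y ∈ varsClause c, y ∉ X) → l.1 ∈ BV)
    {f g : Var → Bool}
    (hfg : ∀ v ∈ BV, f v = g v)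
    (hsat : ∀ c ∈ BC, (satClauseOn X f c ↔ satClauseOn X g c))
    (hbit : (∃ c ∈ F, varsClause c ⊆ X ∧ ¬ satClauseOn X f c) ↔
            (∃ c ∈ F, varsClause c ⊆ X ∧ ¬ satClauseOn X g c)) :
    restrict F X f = restrict F X g :=
  Finset.Subset.antisymm
    (restrict_subset_of_sig F X BV BC hcross hfg hsat hbit.mp)
    (restrict_subset_of_sig F X BV BC hcross (fun v hv => (hfg v hv).symm)
      (fun c hc => (hsat c hc).symm) hbit.mpr)

open Classical in
/-- The signature of an assignment. -/
noncomputable def sigMap (F : CNF) (X : Finset Var) (BV : Finset Var) (BC : Finset Clause)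
    (f : Var → Bool) : Finset Var × Finset Clause × Bool :=
  (BV.filter (fun v => f v = true), BC.filter (satClauseOn X f),
    decide (∃ c ∈ F, varsClause c ⊆ X ∧ ¬ satClauseOn X f c))

lemma st_ncard_le (F : CNF) (X : Finset Var) (BV : Finset Var) (BC : Finset Clause)
    (hcross : ∀ c ∈ F, c ∉ BC → ∀ l ∈ c, l.1 ∈ X →
      (∃ y ∈ varsClause c, y ∉ X) → l.1 ∈ BV) :
    (st F X).ncard ≤ 2 ^ (BV.card + BC.card + 1) := by
  classical
  set S : Finset (Finset Var × Finset Clause × Bool) :=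
    BV.powerset ×ˢ BC.powerset ×ˢ (Finset.univ : Finset Bool) with hS
  have hrestr : ∀ f g : Var → Bool, sigMap F X BV BC f = sigMap F X BV BC g →
      restrict F X f = restrict F X g := by
    intro f g hfg
    have h1 : BV.filter (fun v => f v = true) = BV.filter (fun v => g v = true) :=
      congrArg Prod.fst hfg
    have h2 : BC.filter (satClauseOn X f) = BC.filter (satClauseOn X g) :=
      congrArg (fun p => p.2.1) hfg
    have h3 := congrArg (fun p => p.2.2) hfg
    refine restrict_eq_of_sig F X BV BC hcross ?_ ?_ ?_
    · intro v hv
      have : v ∈ BV.filter (fun v => f v = true) ↔ v ∈ BV.filter (fun v => g v = true) := by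
        rw [h1]
      simp only [Finset.mem_filter, and_iff_right hv] at this
      cases hf : f v <;> cases hg : g v <;> simp_all
    · intro c hc
      have : c ∈ BC.filter (satClauseOn X f) ↔ c ∈ BC.filter (satClauseOn X g) := by rw [h2]
      simp only [Finset.mem_filter, and_iff_right hc] at this
      exact this
    · exact decide_eq_decide.mp h3
  have hmem : ∀ f : Var → Bool, sigMap F X BV BC f ∈ S := by
    intro f
    simp only [hS, Finset.mem_product, Finset.mem_powerset, Finset.mem_univ, and_true]
    exact ⟨Finset.filter_subset _ _, Finset.filter_subset _ _⟩
  have key : (st F X).ncard ≤ (↑S : Set (Finset Var × Finset Clause × Bool)).ncard := by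
    refine Set.ncard_le_ncard_of_injOn
      (fun G => if h : G ∈ st F X then sigMap F X BV BC h.choose else default) ?_ ?_
      (S.finite_toSet)
    · intro G hG
      simp only [dif_pos hG]
      exact hmem _
    · intro G hG H hH hGH
      simp only [dif_pos hG, dif_pos hH] at hGH
      have hGspec : G = restrict F X hG.choose := hG.choose_spec
      have hHspec : H = restrict F X hH.choose := hH.choose_spec
      rw [hGspec, hHspec]
      exact hrestr _ _ hGH
  have hScard : S.card = 2 ^ (BV.card + BC.card + 1) := by
    simp only [hS, Finset.card_product, Finset.card_powerset, Finset.card_univ,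
      Fintype.card_bool]
    rw [pow_succ, pow_add]
    ring
  refine le_trans key ?_
  rw [Set.ncard_coe_finset, hScard]

/- firstIdx helpers -/
lemma firstIdx_lt {P : List (Finset IVertex)} {u : IVertex}
    (h : ∃ B ∈ P, u ∈ B) : firstIdx P u < P.length := by
  apply List.findIdx_lt_length_of_exists
  obtain ⟨B, hB, huB⟩ := h
  exact ⟨B, hB, by simpa using huB⟩

lemma mem_get_firstIdx {P : List (Finset IVertex)} {u : IVertex}
    (h : firstIdx P u < P.length) : u ∈ P[firstIdx P u] := by
  have := List.findIdx_getElem (p := fun B => decide (u ∈ B)) (w := h)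
  exact of_decide_eq_true this

lemma firstIdx_le {P : List (Finset IVertex)} {u : IVertex} {j : ℕ}
    (hj : j < P.length) (h : u ∈ P[j]) : firstIdx P u ≤ j := by
  by_contra hlt
  push_neg at hlt
  have := List.not_of_lt_findIdx (p := fun B => decide (u ∈ B)) (xs := P) hlt
  simp only [decide_eq_false_iff_not] at this
  exact this h

theorem pathwidth_subterm_width (F : CNF) (k : ℕ) (P : List (Finset IVertex))
    (σ : List Var) (hP : IsPathDecomp F P) (hw : ∀ B ∈ P, B.card ≤ k)
    (hσ : IsForgetOrdering F P σ) :
    stw F σ ≤ 2 ^ (k + 1) := by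
  classical
  obtain ⟨hvars, hclauses, hedges, hconn⟩ := hP
  obtain ⟨hnd, hto, hord⟩ := hσ
  unfold stw
  apply Finset.sup_le
  intro i hi
  rw [Finset.mem_Icc] at hi
  obtain ⟨hi1, hi2⟩ := hi
  set X := (σ.take i).toFinset with hX
  have hilen : i - 1 < σ.length := by omega
  set x := σ[i-1] with hx
  have hxσ : x ∈ σ := List.getElem_mem hilen
  have hxF : x ∈ varsCNF F := by rw [← hto]; exact List.mem_toFinset.mpr hxσ
  have hidx : σ.idxOf x = i - 1 := List.Nodup.idxOf_getElem hnd _ _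
  set t := firstIdx P (Sum.inl x) with htdef
  have htlen : t < P.length := firstIdx_lt (hvars x hxF)
  -- membership in X in terms of indexOf
  have hmemX : ∀ u, u ∈ X ↔ (u ∈ σ ∧ σ.idxOf u < i) := by
    intro u
    rw [hX, List.mem_toFinset, List.mem_take_iff_getElem]
    constructor
    · rintro ⟨j, hj, rfl⟩
      have hjlen : j < σ.length := lt_of_lt_of_le hj (min_le_right _ _)
      refine ⟨List.getElem_mem hjlen, ?_⟩
      rw [List.Nodup.idxOf_getElem hnd _ hjlen]
      exact lt_of_lt_of_le hj (min_le_left _ _)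
    · rintro ⟨hu, hlt⟩
      have hul : σ.idxOf u < σ.length := List.idxOf_lt_length_iff.mpr hu
      exact ⟨σ.idxOf u, lt_min hlt hul, List.getElem_idxOf hul⟩
  -- variables in X have first index ≤ t
  have hXle : ∀ u ∈ X, firstIdx P (Sum.inl u) ≤ t := by
    intro u huX
    obtain ⟨huσ, hult⟩ := (hmemX u).mp huX
    have huF : u ∈ varsCNF F := by rw [← hto]; exact List.mem_toFinset.mpr huσ
    by_contra hgt
    push_neg at hgt
    have := hord x hxF u huF hgt
    omega
  -- variables outside X have first index ≥ t
  have hXge : ∀ y ∈ varsCNF F, y ∉ X → t ≤ firstIdx P (Sum.inl y) := by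
    intro y hyF hyX
    have hyσ : y ∈ σ := by rw [← List.mem_toFinset, hto]; exact hyF
    by_contra hgt
    push_neg at hgt
    have := hord y hyF x hxF hgt
    exact hyX ((hmemX y).mpr ⟨hyσ, by omega⟩)
  -- the boundary bag
  set Bt := P[t] with hBt
  have hBtP : Bt ∈ P := List.getElem_mem htlen
  set BV : Finset Var := X.filter (fun v => (Sum.inl v : IVertex) ∈ Bt) with hBV
  set BC : Finset Clause := F.filter (fun c => (Sum.inr c : IVertex) ∈ Bt) with hBC
  -- connectivity helper
  have hconn' : ∀ (u : IVertex) (p q : ℕ) (hp : p < P.length) (hq : q < P.length),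
      p ≤ t → t ≤ q → u ∈ P[p] → u ∈ P[q] → u ∈ Bt := by
    intro u p q hp hq hpt htq hup huq
    exact hconn u p t q hpt htq hp htlen hq (by simpa using hup) (by simpa using huq)
  -- crossing property
  have hcross : ∀ c ∈ F, c ∉ BC → ∀ l ∈ c, l.1 ∈ X →
      (∃ y ∈ varsClause c, y ∉ X) → l.1 ∈ BV := by
    intro c hcF hcBC l hl hlX ⟨y, hy, hyX⟩
    have hcBt : (Sum.inr c : IVertex) ∉ Bt := by
      intro h
      exact hcBC (Finset.mem_filter.mpr ⟨hcF, h⟩)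
    have hu : l.1 ∈ varsClause c := Finset.mem_image.mpr ⟨l, hl, rfl⟩
    have hyF : y ∈ varsCNF F := (Finset.le_sup (f := varsClause) hcF : varsClause c ⊆ varsCNF F) hy
    -- edge bags
    obtain ⟨B1, hB1P, hB1u, hB1c⟩ := hedges c hcF l.1 hu
    obtain ⟨p, hp, hB1⟩ := List.mem_iff_getElem.mp hB1P
    obtain ⟨B2, hB2P, hB2y, hB2c⟩ := hedges c hcF y hy
    obtain ⟨q, hq, hB2⟩ := List.mem_iff_getElem.mp hB2P
    subst hB1 hB2
    -- q ≥ t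
    have hqt : t ≤ q := le_trans (hXge y hyF hyX) (firstIdx_le hq hB2y)
    rcases le_total p t with hpt | htp
    · -- then c is in the boundary bag, contradiction
      exact absurd (hconn' (Sum.inr c) p q hp hq hpt hqt hB1c hB2c) hcBt
    · -- then l.1 is in the boundary bag
      have hflt : firstIdx P (Sum.inl l.1) < P.length :=
        firstIdx_lt ⟨P[p], List.getElem_mem hp, hB1u⟩
      have hmem1 : (Sum.inl l.1 : IVertex) ∈ P[firstIdx P (Sum.inl l.1)] :=
        mem_get_firstIdx hflt
      have h1 : (Sum.inl l.1 : IVertex) ∈ Bt :=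
        hconn' (Sum.inl l.1) _ p hflt hp (hXle l.1 hlX) htp hmem1 hB1u
      exact Finset.mem_filter.mpr ⟨hlX, h1⟩
  -- cardinality bound
  have hcard : BV.card + BC.card ≤ k := by
    have hinj1 : (BV.image (Sum.inl : Var → IVertex)).card = BV.card :=
      Finset.card_image_of_injective _ Sum.inl_injective
    have hinj2 : (BC.image (Sum.inr : Clause → IVertex)).card = BC.card :=
      Finset.card_image_of_injective _ Sum.inr_injective
    have hdisj : Disjoint (BV.image (Sum.inl : Var → IVertex))
        (BC.image (Sum.inr : Clause → IVertex)) := by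
      rw [Finset.disjoint_left]
      rintro a ha hb
      obtain ⟨v, _, rfl⟩ := Finset.mem_image.mp ha
      obtain ⟨c, _, hc⟩ := Finset.mem_image.mp hb
      exact Sum.inr_ne_inl hc
    have hsub : BV.image (Sum.inl : Var → IVertex) ∪ BC.image Sum.inr ⊆ Bt := by
      intro a ha
      rcases Finset.mem_union.mp ha with h | h
      · obtain ⟨v, hv, rfl⟩ := Finset.mem_image.mp h
        exact (Finset.mem_filter.mp hv).2
      · obtain ⟨c, hc, rfl⟩ := Finset.mem_image.mp h
        exact (Finset.mem_filter.mp hc).2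
    calc BV.card + BC.card
        = (BV.image (Sum.inl : Var → IVertex)).card + (BC.image Sum.inr).card := by
          rw [hinj1, hinj2]
      _ = (BV.image (Sum.inl : Var → IVertex) ∪ BC.image Sum.inr).card :=
          (Finset.card_union_of_disjoint hdisj).symm
      _ ≤ Bt.card := Finset.card_le_card hsub
      _ ≤ k := hw Bt hBtP
  calc (st F X).ncard ≤ 2 ^ (BV.card + BC.card + 1) := st_ncard_le F X BV BC hcross
    _ ≤ 2 ^ (k + 1) := Nat.pow_le_pow_right (by norm_num) (by omega)
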